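/- The function x ↦ x³/(eˣ − 1) is integrable on (0, ∞) and ∫₀^∞ x³/(eˣ − 1) dx = π⁴/15. -/

import Mathlib

open MeasureTheory Real Set

/-- `e^t - e^{-t} ≥ 2t` for `t ≥ 0`. -/
lemma bose_aux_sinh {t : ℝ} (ht : 0 ≤ t) : 2 * t ≤ Real.exp t - Real.exp (-t) := by
  have h1 : 1 + t + t ^ 2 / 2 + t ^ 3 / 6 ≤ Real.exp t := by
    have h := Real.sum_le_exp_of_nonneg ht 4
    rw [Finset.sum_range_succ, Finset.sum_range_succ, Finset.sum_range_succ,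
      Finset.sum_range_one] at h
    norm_num [Nat.factorial] at h
    linarith
  have h2 : Real.exp t * Real.exp (-t) = 1 := by rw [← Real.exp_add]; simp
  have h3 : 0 < Real.exp (-t) := Real.exp_pos _
  have h4 : 0 < Real.exp t := Real.exp_pos _
  nlinarith [sq_nonneg t, sq_nonneg (t ^ 2), mul_nonneg (mul_nonneg ht ht) ht,
    mul_pos h3 h4, sq_nonneg (Real.exp t - 1 - t)]

/-- Pointwise bound for the Bose integrand. -/
lemma bose_aux_bound {x : ℝ} (hx : 0 < x) :
    x ^ 3 / (Real.exp x - 1) ≤ x ^ 2 * Real.exp (-(1 / 2) * x) := by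
  have hd : 0 < Real.exp x - 1 := by
    have : (1 : ℝ) < Real.exp x := by
      rw [← Real.exp_zero]; exact Real.exp_lt_exp.mpr hx
    linarith
  rw [div_le_iff₀ hd]
  have key : x ≤ Real.exp (x / 2) - Real.exp (-(x / 2)) := by
    have := bose_aux_sinh (t := x / 2) (by linarith)
    linarith
  have hxe : x ≤ Real.exp (-(1 / 2) * x) * (Real.exp x - 1) := by
    have : Real.exp (-(1 / 2) * x) * (Real.exp x - 1)
        = Real.exp (x / 2) - Real.exp (-(x / 2)) := by
      rw [mul_sub, ← Real.exp_add, mul_one]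
      ring_nf
    rw [this]; exact key
  calc x ^ 3 = x ^ 2 * x := by ring
    _ ≤ x ^ 2 * (Real.exp (-(1 / 2) * x) * (Real.exp x - 1)) := by
        exact mul_le_mul_of_nonneg_left hxe (by positivity)
    _ = x ^ 2 * Real.exp (-(1 / 2) * x) * (Real.exp x - 1) := by ring

/-- Each term's integral. -/
lemma bose_aux_int (n : ℕ) :
    IntegrableOn (fun x : ℝ => x ^ 3 * Real.exp (-((n : ℝ) + 1) * x)) (Ioi 0) volume := by
  have h := integrableOn_rpow_mul_exp_neg_mul_rpow (p := 1) (s := 3) (b := (n : ℝ) + 1)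
    (by norm_num) one_pos (by positivity)
  refine h.congr_fun (fun x _ => ?_) measurableSet_Ioi
  dsimp only
  rw [show (3 : ℝ) = ((3 : ℕ) : ℝ) by norm_num, Real.rpow_natCast, Real.rpow_one]

lemma bose_aux_eval (n : ℕ) :
    (∫ x in Ioi (0 : ℝ), x ^ 3 * Real.exp (-((n : ℝ) + 1) * x)) = 6 / ((n : ℝ) + 1) ^ 4 := by
  have hr : (0 : ℝ) < (n : ℝ) + 1 := by positivity
  have h := Real.integral_rpow_mul_exp_neg_mul_Ioi (a := 4) (r := (n : ℝ) + 1)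
    (by norm_num) hr
  have h2 : (∫ x in Ioi (0 : ℝ), x ^ 3 * Real.exp (-((n : ℝ) + 1) * x))
      = (1 / ((n : ℝ) + 1)) ^ (4 : ℝ) * Real.Gamma 4 := by
    rw [← h]
    refine setIntegral_congr_fun measurableSet_Ioi (fun x _ => ?_)
    rw [show (4 : ℝ) - 1 = ((3 : ℕ) : ℝ) by norm_num, Real.rpow_natCast, neg_mul]
  have hG : Real.Gamma 4 = 6 := by
    rw [show (4 : ℝ) = ((3 : ℕ) : ℝ) + 1 by norm_num, Real.Gamma_nat_eq_factorial]
    norm_num [Nat.factorial]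
  rw [h2, hG, show (4 : ℝ) = ((4 : ℕ) : ℝ) by norm_num, Real.rpow_natCast, div_pow, one_pow]
  ring

/-- Pointwise sum identity. -/
lemma bose_aux_hasSum {x : ℝ} (hx : 0 < x) :
    HasSum (fun n : ℕ => x ^ 3 * Real.exp (-((n : ℝ) + 1) * x))
      (x ^ 3 / (Real.exp x - 1)) := by
  set r := Real.exp (-x) with hr
  have hr0 : 0 ≤ r := (Real.exp_pos _).le
  have hr1 : r < 1 := by
    rw [hr]
    exact Real.exp_lt_one_iff.mpr (by linarith)
  have hgeo := (hasSum_geometric_of_lt_one hr0 hr1).mul_left (x ^ 3 * r)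
  have hd : 0 < Real.exp x - 1 := by
    have : (1 : ℝ) < Real.exp x := by
      rw [← Real.exp_zero]; exact Real.exp_lt_exp.mpr hx
    linarith
  have he : Real.exp x ≠ 0 := (Real.exp_pos _).ne'
  have h1 : x ^ 3 * r * (1 - r)⁻¹ = x ^ 3 / (Real.exp x - 1) := by
    rw [hr, Real.exp_neg]
    field_simp
  have h2 : ∀ n : ℕ, x ^ 3 * r * r ^ n = x ^ 3 * Real.exp (-((n : ℝ) + 1) * x) := by
    intro n
    rw [hr, ← Real.exp_nat_mul, mul_assoc, ← Real.exp_add]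
    congr 2
    push_cast
    ring
  rw [h1] at hgeo
  exact funext h2 ▸ hgeo

theorem bose_integral :
    IntegrableOn (fun x : ℝ => x ^ 3 / (Real.exp x - 1)) (Set.Ioi (0 : ℝ)) volume ∧
    (∫ x in Set.Ioi (0 : ℝ), x ^ 3 / (Real.exp x - 1)) = π ^ 4 / 15 := by
  have hone : ∀ x : ℝ, 0 < x → 0 < Real.exp x - 1 := fun x hx => by
    have : (1 : ℝ) < Real.exp x := by rw [← Real.exp_zero]; exact Real.exp_lt_exp.mpr hx
    linarith
  have hmeas : AEStronglyMeasurable (fun x : ℝ => x ^ 3 / (Real.exp x - 1))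
      (volume.restrict (Ioi 0)) := by
    refine (ContinuousOn.aestronglyMeasurable ?_ measurableSet_Ioi)
    exact ContinuousOn.div (continuous_pow 3).continuousOn
      (Real.continuous_exp.sub continuous_const).continuousOn
      (fun x hx => (hone x hx).ne')
  have hg : IntegrableOn (fun x : ℝ => x ^ 2 * Real.exp (-(1 / 2) * x)) (Ioi 0) volume := by
    have h := integrableOn_rpow_mul_exp_neg_mul_rpow (p := 1) (s := 2) (b := 1 / 2)
      (by norm_num) one_pos (by norm_num)
    refine h.congr_fun (fun x _ => ?_) measurableSet_Ioi
    dsimp only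
    rw [show (2 : ℝ) = ((2 : ℕ) : ℝ) by norm_num, Real.rpow_natCast, Real.rpow_one]
  have hint : IntegrableOn (fun x : ℝ => x ^ 3 / (Real.exp x - 1)) (Ioi 0) volume := by
    refine hg.mono' hmeas ?_
    rw [ae_restrict_iff' measurableSet_Ioi]
    filter_upwards with x hx
    have hx' : (0 : ℝ) < x := hx
    have hd := hone x hx'
    rw [Real.norm_eq_abs, abs_of_nonneg (div_nonneg (pow_nonneg hx'.le 3) hd.le)]
    exact bose_aux_bound hx'
  refine ⟨hint, ?_⟩
  set F : ℕ → ℝ → ℝ := fun n x => x ^ 3 * Real.exp (-((n : ℝ) + 1) * x) with hF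
  have hnorm : ∀ n, (∫ x in Ioi (0 : ℝ), ‖F n x‖) = 6 / ((n : ℝ) + 1) ^ 4 := by
    intro n
    rw [← bose_aux_eval n]
    refine setIntegral_congr_fun measurableSet_Ioi (fun x hx => ?_)
    have hx' : (0 : ℝ) < x := hx
    rw [hF]
    rw [Real.norm_eq_abs,
      abs_of_nonneg (mul_nonneg (pow_nonneg hx'.le 3) (Real.exp_pos _).le)]
  have hzeta : HasSum (fun n : ℕ => 1 / ((n : ℝ) + 1) ^ 4) (π ^ 4 / 90) := by
    have h0 : HasSum (fun n : ℕ => (1 : ℝ) / (n : ℝ) ^ 4)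
        (π ^ 4 / 90 + ∑ i ∈ Finset.range 1, (1 : ℝ) / (i : ℝ) ^ 4) := by
      simpa using hasSum_zeta_four
    have h1 := (hasSum_nat_add_iff (f := fun n : ℕ => (1 : ℝ) / (n : ℝ) ^ 4) 1).mpr h0
    have hfun : (fun n : ℕ => (1 : ℝ) / ((n + 1 : ℕ) : ℝ) ^ 4)
        = fun n : ℕ => 1 / ((n : ℝ) + 1) ^ 4 := by
      funext n; push_cast; ring
    rwa [hfun] at h1
  have hsummable : Summable (fun n : ℕ => ∫ x in Ioi (0 : ℝ), ‖F n x‖) := by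
    simp only [hnorm]
    exact ((hzeta.mul_left 6).summable).congr (fun n => by ring)
  have hkey := hasSum_integral_of_summable_integral_norm
    (μ := volume.restrict (Ioi (0 : ℝ))) (F := F) bose_aux_int hsummable
  have heq : (∫ x in Ioi (0 : ℝ), ∑' n, F n x)
      = ∫ x in Ioi (0 : ℝ), x ^ 3 / (Real.exp x - 1) :=
    setIntegral_congr_fun measurableSet_Ioi (fun x hx => (bose_aux_hasSum hx).tsum_eq)
  rw [heq] at hkey
  have hfun2 : (fun n : ℕ => ∫ x in Ioi (0 : ℝ), F n x)
      = fun n : ℕ => 6 / ((n : ℝ) + 1) ^ 4 := by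
    funext n; exact bose_aux_eval n
  rw [hfun2] at hkey
  have hsum2 : HasSum (fun n : ℕ => 6 / ((n : ℝ) + 1) ^ 4) (π ^ 4 / 15) := by
    have h6 := hzeta.mul_left 6
    have : (6 : ℝ) * (π ^ 4 / 90) = π ^ 4 / 15 := by ring
    rw [this] at h6
    have hfun3 : (fun n : ℕ => (6 : ℝ) * (1 / ((n : ℝ) + 1) ^ 4))
        = fun n : ℕ => 6 / ((n : ℝ) + 1) ^ 4 := by
      funext n; ring
    rwa [hfun3] at h6
  exact hkey.unique hsum2
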